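/- At the point (a,b) = (−1,0) one has Δ(−1,0) = 0, ∂Δ/∂b(−1,0) = 0, ∂Δ/∂a(−1,0) = 10000 and ∂²Δ/∂b²(−1,0) = 1000. Consequently, the level curve Δ = 0 near (−1,0) is the graph of a function a = a(b) with a(0) = −1, a'(0) = 0 and a''(0) = −1/10, i.e. a = −1 − b²/20 + O(b³). -/

import Mathlib

open Filter

noncomputable def dA (a t : ℝ) : ℝ :=
  80*a^4 + 16*(t^2+68)*a^3 + 48*(t^2+144)*a^2 - 16*(t^2-80)*(16+t^2)*a + 96*(16+t^2)^2

noncomputable def dB (a t : ℝ) : ℝ :=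
  8*t*a^4 + 32*t*a^3 - (16*t*(16+t^2) + 16*t*(t^2-80))*a^2 + 384*t*(16+t^2)*a
    + 24*t*(16+t^2)^2

lemma hasDerivAt_Delta {u : ℝ → ℝ} {d b : ℝ} (hu : HasDerivAt u d b) :
    HasDerivAt (fun x => 16*(u x)^5 + 4*(x^2 + 68)*(u x)^4 + 16*(x^2 + 144)*(u x)^3
      - 8*(x^2 - 80)*(16 + x^2)*(u x)^2 + 96*(16 + x^2)^2*(u x) + 4*(16 + x^2)^3)
      (dA (u b) b * d + dB (u b) b) b := by
  have hx : HasDerivAt (fun x : ℝ => x) 1 b := hasDerivAt_id b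
  have h1 := (hu.pow 5).const_mul (16:ℝ)
  have h2 := (((hx.pow 2).add_const (68:ℝ)).const_mul (4:ℝ)).mul (hu.pow 4)
  have h3 := (((hx.pow 2).add_const (144:ℝ)).const_mul (16:ℝ)).mul (hu.pow 3)
  have h4 := ((((hx.pow 2).sub_const (80:ℝ)).const_mul (8:ℝ)).mul
      ((hx.pow 2).const_add (16:ℝ))).mul (hu.pow 2)
  have h5 := ((((hx.pow 2).const_add (16:ℝ)).pow 2).const_mul (96:ℝ)).mul hu
  have h6 := (((hx.pow 2).const_add (16:ℝ)).pow 3).const_mul (4:ℝ)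
  have H := ((((h1.add h2).add h3).sub h4).add h5).add h6
  refine H.congr_deriv ?_
  simp only [dA, dB]
  push_cast
  simp only [Pi.pow_apply, Pi.mul_apply, Pi.add_apply, Pi.sub_apply]
  ring

lemma hasDerivAt_dA {u : ℝ → ℝ} (hu : HasDerivAt u 0 0) (h0 : u 0 = -1) :
    HasDerivAt (fun x => dA (u x) x) 0 0 := by
  unfold dA
  have hx : HasDerivAt (fun x : ℝ => x) 1 0 := hasDerivAt_id 0
  have h1 := (hu.pow 4).const_mul (80:ℝ)
  have h2 := (((hx.pow 2).add_const (68:ℝ)).const_mul (16:ℝ)).mul (hu.pow 3)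
  have h3 := (((hx.pow 2).add_const (144:ℝ)).const_mul (48:ℝ)).mul (hu.pow 2)
  have h4 := ((((hx.pow 2).sub_const (80:ℝ)).const_mul (16:ℝ)).mul
      ((hx.pow 2).const_add (16:ℝ))).mul hu
  have h5 := (((hx.pow 2).const_add (16:ℝ)).pow 2).const_mul (96:ℝ)
  have H := (((h1.add h2).add h3).sub h4).add h5
  refine H.congr_deriv ?_
  rw [h0]
  push_cast
  simp only [Pi.pow_apply, Pi.mul_apply, Pi.add_apply, Pi.sub_apply]
  ring

lemma hasDerivAt_dB {u : ℝ → ℝ} (hu : HasDerivAt u 0 0) (h0 : u 0 = -1) :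
    HasDerivAt (fun x => dB (u x) x) 1000 0 := by
  unfold dB
  have hx : HasDerivAt (fun x : ℝ => x) 1 0 := hasDerivAt_id 0
  have h1 := (hx.const_mul (8:ℝ)).mul (hu.pow 4)
  have h2 := (hx.const_mul (32:ℝ)).mul (hu.pow 3)
  have h3 := (((hx.const_mul (16:ℝ)).mul ((hx.pow 2).const_add (16:ℝ))).add
      ((hx.const_mul (16:ℝ)).mul ((hx.pow 2).sub_const (80:ℝ)))).mul (hu.pow 2)
  have h4 := ((hx.const_mul (384:ℝ)).mul ((hx.pow 2).const_add (16:ℝ))).mul hu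
  have h5 := (hx.const_mul (24:ℝ)).mul (((hx.pow 2).const_add (16:ℝ)).pow 2)
  have H := (((h1.add h2).sub h3).add h4).add h5
  refine H.congr_deriv ?_
  simp only [Pi.pow_apply, Pi.mul_apply, Pi.add_apply, Pi.sub_apply]
  rw [h0]
  push_cast
  ring

noncomputable def Phi : ℝ × ℝ → ℝ × ℝ := fun p =>
  (16*(p.1*p.1*p.1*p.1*p.1) + 4*(p.2*p.2+68)*(p.1*p.1*p.1*p.1)
    + 16*(p.2*p.2+144)*(p.1*p.1*p.1) - 8*(p.2*p.2-80)*(16+p.2*p.2)*(p.1*p.1)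
    + 96*((16+p.2*p.2)*(16+p.2*p.2))*p.1
    + 4*((16+p.2*p.2)*(16+p.2*p.2)*(16+p.2*p.2)), p.2)

lemma Phi_fst (p : ℝ × ℝ) :
    (Phi p).1 = 16*p.1^5 + 4*(p.2^2 + 68)*p.1^4 + 16*(p.2^2 + 144)*p.1^3
      - 8*(p.2^2 - 80)*(16 + p.2^2)*p.1^2 + 96*(16 + p.2^2)^2*p.1 + 4*(16 + p.2^2)^3 := by
  simp only [Phi]; ring

lemma Phi_snd (p : ℝ × ℝ) : (Phi p).2 = p.2 := rfl

lemma Phi_pt : Phi ((-1,0) : ℝ × ℝ) = ((0,0) : ℝ × ℝ) := by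
  apply Prod.ext
  · rw [Phi_fst]; norm_num
  · rfl

lemma exists_inverse : ∃ g : ℝ × ℝ → ℝ × ℝ,
    ContDiffAt ℝ 2 g ((0,0) : ℝ × ℝ) ∧
    (∀ᶠ x in nhds ((-1,0) : ℝ × ℝ), g (Phi x) = x) ∧
    (∀ᶠ y in nhds ((0,0) : ℝ × ℝ), Phi (g y) = y) := by
  have hC : ContDiffAt ℝ 2 Phi ((-1,0) : ℝ × ℝ) := by
    apply ContDiff.contDiffAt
    unfold Phi
    fun_prop
  set E : (ℝ × ℝ) ≃L[ℝ] (ℝ × ℝ) :=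
    ContinuousLinearEquiv.prodCongr
      (ContinuousLinearEquiv.unitsEquivAut ℝ (Units.mk0 (10000:ℝ) (by norm_num)))
      (ContinuousLinearEquiv.refl ℝ ℝ) with hE
  have hF : HasFDerivAt Phi ((E : (ℝ × ℝ) →L[ℝ] (ℝ × ℝ))) ((-1,0) : ℝ × ℝ) := by
    have hp1 : HasFDerivAt (fun p : ℝ × ℝ => p.1) (ContinuousLinearMap.fst ℝ ℝ ℝ)
        ((-1,0) : ℝ × ℝ) := hasFDerivAt_fst
    have hp2 : HasFDerivAt (fun p : ℝ × ℝ => p.2) (ContinuousLinearMap.snd ℝ ℝ ℝ)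
        ((-1,0) : ℝ × ℝ) := hasFDerivAt_snd
    have q2 := hp2.mul hp2
    have u2 := hp1.mul hp1
    have u3 := u2.mul hp1
    have u4 := u3.mul hp1
    have u5 := u4.mul hp1
    have s2 := q2.const_add (16:ℝ)
    have s2sq := s2.mul s2
    have h1 := u5.const_mul (16:ℝ)
    have h2 := ((q2.add_const (68:ℝ)).const_mul (4:ℝ)).mul u4
    have h3 := ((q2.add_const (144:ℝ)).const_mul (16:ℝ)).mul u3
    have h4 := (((q2.sub_const (80:ℝ)).const_mul (8:ℝ)).mul s2).mul u2
    have h5 := (s2sq.const_mul (96:ℝ)).mul hp1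
    have h6 := (s2sq.mul s2).const_mul (4:ℝ)
    have H := (((((h1.add h2).add h3).sub h4).add h5).add h6).prodMk hp2
    refine H.congr_fderiv ?_
    apply ContinuousLinearMap.ext
    intro v
    apply Prod.ext <;>
      simp [hE, ContinuousLinearEquiv.prodCongr_apply,
        ContinuousLinearEquiv.unitsEquivAut_apply] <;> ring
  have hn : (2:WithTop ℕ∞) ≠ 0 := by norm_num
  have hS : HasStrictFDerivAt Phi ((E : (ℝ × ℝ) →L[ℝ] (ℝ × ℝ))) ((-1,0) : ℝ × ℝ) :=
    hC.hasStrictFDerivAt' hF hn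
  refine ⟨hS.localInverse Phi E ((-1,0) : ℝ × ℝ), ?_, ?_, ?_⟩
  · have := ContDiffAt.to_localInverse hC hF hn
    rw [Phi_pt] at this
    exact this
  · exact hS.eventually_left_inverse
  · have := hS.eventually_right_inverse
    rwa [Phi_pt] at this


/-- At `(a,b) = (−1,0)` one has `Δ = 0`, `Δ_b = 0`, `Δ_a = 10000`,
`Δ_bb = 1000`; consequently near `(−1,0)` the level curve `Δ = 0` is the
graph of a function `a = a(b)` with `a(0) = −1`, `a'(0) = 0`,
`a''(0) = −1/10`, i.e. `a = −1 − b²/20 + O(b³)`. -/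
theorem disc_curve_near_minus_one (Δ : ℝ → ℝ → ℝ)
    (hΔ : Δ = fun a b => 16*a^5 + 4*(b^2 + 68)*a^4 + 16*(b^2 + 144)*a^3
      - 8*(b^2 - 80)*(16 + b^2)*a^2 + 96*(16 + b^2)^2*a + 4*(16 + b^2)^3) :
    Δ (-1) 0 = 0 ∧
    deriv (fun b => Δ (-1) b) 0 = 0 ∧
    deriv (fun a => Δ a 0) (-1) = 10000 ∧
    deriv (deriv (fun b => Δ (-1) b)) 0 = 1000 ∧
    ∃ f : ℝ → ℝ, ∃ U ∈ nhds ((-1, 0) : ℝ × ℝ),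
      (∀ x ∈ U, (Δ (Prod.fst x) (Prod.snd x) = 0 ↔ Prod.fst x = f (Prod.snd x))) ∧
      f 0 = -1 ∧ deriv f 0 = 0 ∧ deriv (deriv f) 0 = -1/10 := by
  
  subst hΔ
  -- derivative of b ↦ Δ (-1) b
  have key : ∀ b : ℝ, HasDerivAt (fun b : ℝ => 16*(-1:ℝ)^5 + 4*(b^2 + 68)*(-1:ℝ)^4
      + 16*(b^2 + 144)*(-1:ℝ)^3 - 8*(b^2 - 80)*(16 + b^2)*(-1:ℝ)^2
      + 96*(16 + b^2)^2*(-1:ℝ) + 4*(16 + b^2)^3) (1000*b + 352*b^3 + 24*b^5) b := by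
    intro b
    have h : HasDerivAt (fun x : ℝ => 16*((-1:ℝ))^5 + 4*(x^2 + 68)*((-1:ℝ))^4
        + 16*(x^2 + 144)*((-1:ℝ))^3 - 8*(x^2 - 80)*(16 + x^2)*((-1:ℝ))^2
        + 96*(16 + x^2)^2*((-1:ℝ)) + 4*(16 + x^2)^3)
        (dA (-1) b * 0 + dB (-1) b) b := hasDerivAt_Delta (hasDerivAt_const b (-1:ℝ))
    convert h using 1
    simp [dA, dB]; ring
  refine ⟨by norm_num, ?_, ?_, ?_, ?_⟩
  · show deriv (fun b : ℝ => 16*(-1:ℝ)^5 + 4*(b^2 + 68)*(-1:ℝ)^4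
      + 16*(b^2 + 144)*(-1:ℝ)^3 - 8*(b^2 - 80)*(16 + b^2)*(-1:ℝ)^2
      + 96*(16 + b^2)^2*(-1:ℝ) + 4*(16 + b^2)^3) 0 = 0
    rw [(key 0).deriv]
    norm_num
  · have k3 : HasDerivAt (fun a : ℝ => 16*a^5 + 4*((0:ℝ)^2 + 68)*a^4 + 16*((0:ℝ)^2 + 144)*a^3
        - 8*((0:ℝ)^2 - 80)*(16 + (0:ℝ)^2)*a^2 + 96*(16 + (0:ℝ)^2)^2*a + 4*(16 + (0:ℝ)^2)^3)
        10000 (-1) := by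
      have hx : HasDerivAt (fun a : ℝ => a) 1 (-1) := hasDerivAt_id (-1)
      have h1 := (hx.pow 5).const_mul (16:ℝ)
      have h2 := (hx.pow 4).const_mul (4*((0:ℝ)^2 + 68))
      have h3 := (hx.pow 3).const_mul (16*((0:ℝ)^2 + 144))
      have h4 := (hx.pow 2).const_mul (8*((0:ℝ)^2 - 80)*(16 + (0:ℝ)^2))
      have h5 := hx.const_mul (96*(16 + (0:ℝ)^2)^2)
      have h6 := hasDerivAt_const (-1:ℝ) (4*(16 + (0:ℝ)^2)^3)
      have H := ((((h1.add h2).add h3).sub h4).add h5).add h6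
      refine H.congr_deriv ?_
      push_cast
      norm_num
    exact k3.deriv
  · show deriv (deriv (fun b : ℝ => 16*(-1:ℝ)^5 + 4*(b^2 + 68)*(-1:ℝ)^4
      + 16*(b^2 + 144)*(-1:ℝ)^3 - 8*(b^2 - 80)*(16 + b^2)*(-1:ℝ)^2
      + 96*(16 + b^2)^2*(-1:ℝ) + 4*(16 + b^2)^3)) 0 = 1000
    have hd : deriv (fun b : ℝ => 16*(-1:ℝ)^5 + 4*(b^2 + 68)*(-1:ℝ)^4
        + 16*(b^2 + 144)*(-1:ℝ)^3 - 8*(b^2 - 80)*(16 + b^2)*(-1:ℝ)^2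
        + 96*(16 + b^2)^2*(-1:ℝ) + 4*(16 + b^2)^3)
        = fun b : ℝ => 1000*b + 352*b^3 + 24*b^5 := funext fun b => (key b).deriv
    rw [hd]
    have h5 : HasDerivAt (fun b : ℝ => 1000*b + 352*b^3 + 24*b^5) 1000 0 := by
      have hx : HasDerivAt (fun b : ℝ => b) 1 0 := hasDerivAt_id 0
      have H := ((hx.const_mul (1000:ℝ)).add ((hx.pow 3).const_mul (352:ℝ))).add
        ((hx.pow 5).const_mul (24:ℝ))
      refine H.congr_deriv ?_
      norm_num
    exact h5.deriv
  -- the implicit function part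
  obtain ⟨g, hgC, hgl, hgr⟩ := exists_inverse
  have hg00 : g ((0,0) : ℝ × ℝ) = ((-1,0) : ℝ × ℝ) := by
    have := hgl.self_of_nhds
    rwa [Phi_pt] at this
  have hgf : (g ((0:ℝ),(0:ℝ))).1 = -1 := by rw [hg00]
  -- continuity / smoothness of f
  have hfC : ContDiffAt ℝ 2 (fun b : ℝ => (g (0, b)).1) 0 := by
    have h1 : ContDiffAt ℝ 2 (fun b : ℝ => (((0:ℝ), b) : ℝ × ℝ)) 0 :=
      (contDiff_const.prodMk contDiff_id).contDiffAt
    have h2 : ContDiffAt ℝ 2 g ((fun b : ℝ => (((0:ℝ), b) : ℝ × ℝ)) 0) := hgC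
    exact (contDiff_fst.contDiffAt).comp 0 (h2.comp 0 h1)
  have hf0 : (fun b : ℝ => (g (0, b)).1) 0 = -1 := hgf
  -- the neighborhood U and the iff
  obtain ⟨S, hS_mem, hSl⟩ := hgl.exists_mem
  obtain ⟨T, hT_mem, hTr⟩ := hgr.exists_mem
  set U : Set (ℝ × ℝ) := S ∩ {x : ℝ × ℝ | (((0:ℝ), x.2) : ℝ × ℝ) ∈ T} with hU_def
  have hU_mem : U ∈ nhds ((-1, 0) : ℝ × ℝ) := by
    apply Filter.inter_mem hS_mem
    have hc : ContinuousAt (fun x : ℝ × ℝ => (((0:ℝ), x.2) : ℝ × ℝ)) ((-1,0) : ℝ × ℝ) := by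
      fun_prop
    exact hc.preimage_mem_nhds hT_mem
  have hIff : ∀ x ∈ U, (16*x.1^5 + 4*(x.2^2 + 68)*x.1^4 + 16*(x.2^2 + 144)*x.1^3
      - 8*(x.2^2 - 80)*(16 + x.2^2)*x.1^2 + 96*(16 + x.2^2)^2*x.1 + 4*(16 + x.2^2)^3 = 0
      ↔ x.1 = (g (0, x.2)).1) := by
    intro x hx
    obtain ⟨hxS, hxT⟩ := hx
    constructor
    · intro h0
      have hPhix : Phi x = (((0:ℝ), x.2) : ℝ × ℝ) := by
        apply Prod.ext
        · rw [Phi_fst]; exact h0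
        · rfl
      have hgx := hSl x hxS
      rw [hPhix] at hgx
      exact (congrArg Prod.fst hgx).symm
    · intro h1
      have h2 := hTr _ hxT
      have h2snd : (g (((0:ℝ), x.2) : ℝ × ℝ)).2 = x.2 := by
        have h := congrArg Prod.snd h2
        simpa [Phi_snd] using h
      have h2fst : (Phi (g (((0:ℝ), x.2) : ℝ × ℝ))).1 = 0 := by rw [h2]
      rw [Phi_fst] at h2fst
      rw [h2snd] at h2fst
      rw [h1]
      exact h2fst
  -- eventual root identity
  have hev : ∀ᶠ b in nhds (0:ℝ), DifferentiableAt ℝ (fun b : ℝ => (g (0, b)).1) b := by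
    have h := hfC.eventually (by norm_num)
    exact h.mono fun y hy => hy.differentiableAt (by norm_num)
  have hkc : ContinuousAt (fun b : ℝ => (((g (0, b)).1, b) : ℝ × ℝ)) 0 :=
    hfC.continuousAt.prodMk continuousAt_id
  have hpt : (fun b : ℝ => (((g (0, b)).1, b) : ℝ × ℝ)) 0 = ((-1, 0) : ℝ × ℝ) := by
    apply Prod.ext
    · exact hgf
    · rfl
  have hpt' : (((g ((0:ℝ),(0:ℝ))).1, (0:ℝ)) : ℝ × ℝ) = ((-1, 0) : ℝ × ℝ) := by
    apply Prod.ext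
    · exact hgf
    · rfl
  have hnb : U ∈ nhds ((((g ((0:ℝ),(0:ℝ))).1, (0:ℝ)) : ℝ × ℝ)) := by
    rw [hpt']; exact hU_mem
  have hmemU : ∀ᶠ b in nhds (0:ℝ), (((g (0, b)).1, b) : ℝ × ℝ) ∈ U :=
    hkc.preimage_mem_nhds hnb
  have E0 : (fun b : ℝ => 16*((g (0, b)).1)^5 + 4*(b^2 + 68)*((g (0, b)).1)^4
      + 16*(b^2 + 144)*((g (0, b)).1)^3 - 8*(b^2 - 80)*(16 + b^2)*((g (0, b)).1)^2
      + 96*(16 + b^2)^2*((g (0, b)).1) + 4*(16 + b^2)^3) =ᶠ[nhds (0:ℝ)] (fun _ => (0:ℝ)) := by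
    filter_upwards [hmemU] with b hb
    exact (hIff _ hb).2 rfl
  have E1 : ∀ᶠ b in nhds (0:ℝ), deriv (fun b : ℝ => 16*((g (0, b)).1)^5
      + 4*(b^2 + 68)*((g (0, b)).1)^4 + 16*(b^2 + 144)*((g (0, b)).1)^3
      - 8*(b^2 - 80)*(16 + b^2)*((g (0, b)).1)^2 + 96*(16 + b^2)^2*((g (0, b)).1)
      + 4*(16 + b^2)^3) b = 0 := by
    have := E0.deriv
    filter_upwards [this] with b hb
    simpa using hb
  have E2 : ∀ᶠ b in nhds (0:ℝ), dA ((g (0, b)).1) b * deriv (fun b : ℝ => (g (0, b)).1) b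
      + dB ((g (0, b)).1) b = 0 := by
    filter_upwards [E1, hev] with b h1 h2
    have h3 : HasDerivAt (fun x : ℝ => 16*((g (0, x)).1)^5 + 4*(x^2 + 68)*((g (0, x)).1)^4
        + 16*(x^2 + 144)*((g (0, x)).1)^3 - 8*(x^2 - 80)*(16 + x^2)*((g (0, x)).1)^2
        + 96*(16 + x^2)^2*((g (0, x)).1) + 4*(16 + x^2)^3)
        (dA ((g (0, b)).1) b * deriv (fun b : ℝ => (g (0, b)).1) b + dB ((g (0, b)).1) b) b :=
      hasDerivAt_Delta h2.hasDerivAt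
    rw [← h3.deriv]
    exact h1
  have f'0 : deriv (fun b : ℝ => (g (0, b)).1) 0 = 0 := by
    have h := E2.self_of_nhds
    rw [hgf] at h
    norm_num [dA, dB] at h
    exact h
  have ne0 : ∀ᶠ b in nhds (0:ℝ), dA ((g (0, b)).1) b ≠ 0 := by
    have hc : ContinuousAt (fun b : ℝ => dA ((g (0, b)).1) b) 0 := by
      have hcf := hfC.continuousAt
      unfold dA
      fun_prop
    have hne : dA ((g (((0:ℝ),(0:ℝ)) : ℝ × ℝ)).1) 0 ≠ 0 := by
      rw [hgf]; norm_num [dA]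
    exact hc.eventually_ne hne
  have E3 : deriv (fun b : ℝ => (g (0, b)).1) =ᶠ[nhds (0:ℝ)]
      fun b : ℝ => -(dB ((g (0, b)).1) b / dA ((g (0, b)).1) b) := by
    filter_upwards [E2, ne0] with b h1 h2
    field_simp
    linarith
  have hdf : HasDerivAt (fun b : ℝ => (g (0, b)).1) 0 0 := by
    have h := hev.self_of_nhds.hasDerivAt
    rwa [f'0] at h
  have hA := hasDerivAt_dA hdf hgf
  have hB := hasDerivAt_dB hdf hgf
  have hne2 : dA ((fun b : ℝ => (g (0, b)).1) 0) 0 ≠ 0 := by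
    show dA ((g (((0:ℝ),(0:ℝ)) : ℝ × ℝ)).1) 0 ≠ 0
    rw [hgf]; norm_num [dA]
  have hq := (hB.div hA hne2).neg
  have hf''0 : deriv (deriv (fun b : ℝ => (g (0, b)).1)) 0 = -1/10 := by
    rw [E3.deriv_eq, HasDerivAt.deriv (f := fun b : ℝ => -(dB ((g (0, b)).1) b / dA ((g (0, b)).1) b)) hq]
    show -((1000 * dA ((g (((0:ℝ),(0:ℝ)) : ℝ × ℝ)).1) 0
      - dB ((g (((0:ℝ),(0:ℝ)) : ℝ × ℝ)).1) 0 * 0) / dA ((g (((0:ℝ),(0:ℝ)) : ℝ × ℝ)).1) 0 ^ 2)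
      = -1/10
    rw [hgf]
    norm_num [dA, dB]
  exact ⟨fun b : ℝ => (g (0, b)).1, U, hU_mem, hIff, hf0, f'0, hf''0⟩
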